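/- Let ρ₋ > ρ₊ > 0, γ ≥ 1, p(r) = r^γ, and suppose u² ≥ (p(ρ₋)-p(ρ₊))/ρ₊. Set B = ρ₋ρ₊u² - (ρ₋-ρ₊)(p(ρ₋)-p(ρ₊)) (so √B ≥ ρ₊|u|). Then the function f(ρ₁) = √B·√(1-ρ₊/ρ₁) - ρ₊|u|·√(1-ρ₋/ρ₁) is positive and strictly decreasing on (ρ₋, ∞). -/

import Mathlib

theorem stmt_10 (ρm ρp u γ : ℝ) (hρ : ρp < ρm) (hρp : 0 < ρp) (hγ : 1 ≤ γ)
    (hu : u ^ 2 ≥ (ρm ^ γ - ρp ^ γ) / ρp)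
    (B : ℝ) (hB : B = ρm * ρp * u ^ 2 - (ρm - ρp) * (ρm ^ γ - ρp ^ γ))
    (f : ℝ → ℝ)
    (hf : ∀ ρ₁ : ℝ, f ρ₁ = Real.sqrt B * Real.sqrt (1 - ρp / ρ₁) -
      ρp * |u| * Real.sqrt (1 - ρm / ρ₁)) :
    (∀ ρ₁ ∈ Set.Ioi ρm, 0 < f ρ₁) ∧ StrictAntiOn f (Set.Ioi ρm) := by
  have hfe : f = fun ρ₁ => Real.sqrt B * Real.sqrt (1 - ρp / ρ₁) -
      ρp * |u| * Real.sqrt (1 - ρm / ρ₁) := funext hf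
  subst hfe
  have hρm : 0 < ρm := hρp.trans hρ
  have hγ0 : 0 < γ := lt_of_lt_of_le one_pos hγ
  have hPpos : 0 < ρm ^ γ - ρp ^ γ := sub_pos.2 (Real.rpow_lt_rpow hρp.le hρ hγ0)
  have hu2 : ρm ^ γ - ρp ^ γ ≤ ρp * u ^ 2 := by
    have := (div_le_iff₀ hρp).mp hu
    linarith
  have hu0 : 0 < u ^ 2 := by nlinarith
  have habs : 0 < |u| := abs_pos.2 (fun h => by simp [h] at hu0)
  have hc : 0 < ρp * |u| := mul_pos hρp habs
  have hBpos : 0 < B := by rw [hB]; nlinarith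
  have hBge : (ρp * |u|) ^ 2 ≤ B := by
    have e : (ρp * |u|) ^ 2 = ρp ^ 2 * u ^ 2 := by rw [mul_pow, sq_abs]
    rw [hB, e]
    nlinarith [mul_nonneg (sub_pos.2 hρ).le (sub_nonneg.2 hu2)]
  have hsb : ρp * |u| ≤ Real.sqrt B := by
    rw [show B = Real.sqrt B ^ 2 from (Real.sq_sqrt hBpos.le).symm] at hBge
    exact le_of_pow_le_pow_left₀ two_ne_zero (Real.sqrt_nonneg B) hBge
  -- facts at a point x > ρm
  have key : ∀ x : ℝ, ρm < x →
      (0 < 1 - ρm / x) ∧ (1 - ρm / x < 1 - ρp / x) ∧ (0 < x) := by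
    intro x hx
    have hx0 : 0 < x := hρm.trans hx
    refine ⟨?_, ?_, hx0⟩
    · have : ρm / x < 1 := (div_lt_one hx0).2 hx
      linarith
    · have : ρp / x < ρm / x := (div_lt_div_iff_of_pos_right hx0).2 hρ
      linarith
  -- positivity
  have hpos : ∀ ρ₁ ∈ Set.Ioi ρm, 0 < Real.sqrt B * Real.sqrt (1 - ρp / ρ₁) -
      ρp * |u| * Real.sqrt (1 - ρm / ρ₁) := by
    intro x hx
    obtain ⟨h2, h12, hx0⟩ := key x hx
    have hs : Real.sqrt (1 - ρm / x) < Real.sqrt (1 - ρp / x) :=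
      Real.sqrt_lt_sqrt h2.le h12
    have h1 : 0 < Real.sqrt (1 - ρp / x) := Real.sqrt_pos.2 (h2.trans h12)
    nlinarith [Real.sqrt_nonneg (1 - ρm / x)]
  refine ⟨hpos, ?_⟩
  -- derivative at each x > ρm
  have hderiv : ∀ x : ℝ, x ∈ Set.Ioi ρm →
      HasDerivAt (fun ρ₁ => Real.sqrt B * Real.sqrt (1 - ρp / ρ₁) -
        ρp * |u| * Real.sqrt (1 - ρm / ρ₁))
        (Real.sqrt B * (ρp / x ^ 2 / (2 * Real.sqrt (1 - ρp / x))) -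
         ρp * |u| * (ρm / x ^ 2 / (2 * Real.sqrt (1 - ρm / x)))) x := by
    intro x hx
    obtain ⟨h2, h12, hx0⟩ := key x hx
    have hin1 : HasDerivAt (fun y : ℝ => 1 - ρp / y) (ρp / x ^ 2) x := by
      have h := (hasDerivAt_const x (1 : ℝ)).sub
        ((hasDerivAt_const x ρp).div (hasDerivAt_id x) hx0.ne')
      convert h using 1
      · rfl
      · rfl
      · rfl
      · simp only [id]; ring
    have hin2 : HasDerivAt (fun y : ℝ => 1 - ρm / y) (ρm / x ^ 2) x := by
      have h := (hasDerivAt_const x (1 : ℝ)).sub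
        ((hasDerivAt_const x ρm).div (hasDerivAt_id x) hx0.ne')
      convert h using 1
      · rfl
      · rfl
      · rfl
      · simp only [id]; ring
    have hs1 := (hin1.sqrt (h2.trans h12).ne').const_mul (Real.sqrt B)
    have hs2 := (hin2.sqrt h2.ne').const_mul (ρp * |u|)
    exact hs1.sub hs2
  apply strictAntiOn_of_deriv_neg (convex_Ioi ρm)
  · exact fun x hx => (hderiv x hx).continuousAt.continuousWithinAt
  · intro x hx
    rw [interior_Ioi] at hx
    rw [(hderiv x hx).deriv]
    obtain ⟨h2, h12, hx0⟩ := key x hx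
    have h1 : 0 < 1 - ρp / x := h2.trans h12
    have hs1 : 0 < Real.sqrt (1 - ρp / x) := Real.sqrt_pos.2 h1
    have hs2 : 0 < Real.sqrt (1 - ρm / x) := Real.sqrt_pos.2 h2
    -- core polynomial inequality
    have e1 : (1 - ρp / x) * x = x - ρp := by field_simp
    have e2 : (1 - ρm / x) * x = x - ρm := by field_simp
    have core0 : B * (x - ρm) < u ^ 2 * ρm ^ 2 * (x - ρp) := by
      rw [hB]
      nlinarith [mul_pos (mul_pos (sub_pos.2 hρ) (mul_pos hu0 hρm)) hx0,
        mul_pos (mul_pos (sub_pos.2 hρ) hPpos) (sub_pos.2 (Set.mem_Ioi.1 hx))]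
    have core : B * ρp ^ 2 * (1 - ρm / x) < ρp ^ 2 * u ^ 2 * ρm ^ 2 * (1 - ρp / x) := by
      apply lt_of_mul_lt_mul_right _ hx0.le
      calc B * ρp ^ 2 * (1 - ρm / x) * x = ρp ^ 2 * (B * (x - ρm)) := by
            rw [mul_assoc, e2]; ring
        _ < ρp ^ 2 * (u ^ 2 * ρm ^ 2 * (x - ρp)) := by
            exact mul_lt_mul_of_pos_left core0 (by positivity)
        _ = ρp ^ 2 * u ^ 2 * ρm ^ 2 * (1 - ρp / x) * x := by
            rw [mul_assoc (ρp ^ 2 * u ^ 2 * ρm ^ 2), e1]; ring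
    -- square root comparison
    have hLR : Real.sqrt B * (ρp * Real.sqrt (1 - ρm / x)) <
        ρp * |u| * (ρm * Real.sqrt (1 - ρp / x)) := by
      apply lt_of_pow_lt_pow_left₀ 2 (by positivity)
      have r1 : (Real.sqrt B * (ρp * Real.sqrt (1 - ρm / x))) ^ 2
          = B * ρp ^ 2 * (1 - ρm / x) := by
        rw [mul_pow, mul_pow, Real.sq_sqrt hBpos.le, Real.sq_sqrt h2.le]; ring
      have r2 : (ρp * |u| * (ρm * Real.sqrt (1 - ρp / x))) ^ 2
          = ρp ^ 2 * u ^ 2 * ρm ^ 2 * (1 - ρp / x) := by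
        rw [mul_pow, mul_pow, mul_pow, sq_abs, Real.sq_sqrt h1.le]; ring
      rw [r1, r2]; exact core
    set s1 : ℝ := Real.sqrt (1 - ρp / x) with hs1def
    set s2 : ℝ := Real.sqrt (1 - ρm / x) with hs2def
    set b : ℝ := Real.sqrt B with hbdef
    have lhs_eq : b * (ρp / x ^ 2 / (2 * s1))
        = (b * (ρp * s2)) / (2 * x ^ 2 * (s1 * s2)) := by
      field_simp
    have rhs_eq : ρp * |u| * (ρm / x ^ 2 / (2 * s2))
        = (ρp * |u| * (ρm * s1)) / (2 * x ^ 2 * (s1 * s2)) := by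
      field_simp
    rw [sub_neg, lhs_eq, rhs_eq]
    exact (div_lt_div_iff_of_pos_right (by positivity)).2 hLR
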